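/- Let T₁ and T₂ be trees of order at least three, and let v be the root vertex of T₂. Then γ_c(T₁∘T₂) = n(T₁)·γ_c(T₂) if and only if v is not an end vertex of T₂. -/

import Mathlib

open Finset
open scoped Classical

/-- `S` is a dominating set of `G`: every vertex outside `S` has a neighbor in `S`. -/
def IsDomSet {α : Type*} (G : SimpleGraph α) (S : Set α) : Prop :=
  ∀ v ∉ S, ∃ u ∈ S, G.Adj u v

/-- The domination number `γ(G)`. -/
noncomputable def domNum {α : Type*} (G : SimpleGraph α) [Fintype α] : ℕ :=
  sInf {k | ∃ S : Finset α, IsDomSet G ↑S ∧ S.card = k}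

/-- The rooted product `G ∘ H` with root `v` of `H`: one copy of `H` for each vertex of `G`,
identifying the root of the `a`-th copy with the vertex `a` of `G`. -/
def rootedProd {α β : Type*} (G : SimpleGraph α) (H : SimpleGraph β) (v : β) :
    SimpleGraph (α × β) where
  Adj x y := (x.2 = v ∧ y.2 = v ∧ G.Adj x.1 y.1) ∨ (x.1 = y.1 ∧ H.Adj x.2 y.2)
  symm := by
    refine ⟨?_⟩
    rintro x y (⟨h1, h2, h3⟩ | ⟨h1, h2⟩)
    · exact Or.inl ⟨h2, h1, h3.symm⟩
    · exact Or.inr ⟨h1.symm, h2.symm⟩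
  loopless := by
    refine ⟨?_⟩
    rintro x (⟨_, _, h⟩ | ⟨_, h⟩)
    · exact G.loopless.irrefl _ h
    · exact H.loopless.irrefl _ h

/-- The graph `G - v` obtained by deleting the vertex `v`. -/
def deleteVert {α : Type*} (G : SimpleGraph α) (v : α) : SimpleGraph {u : α // u ≠ v} :=
  SimpleGraph.comap Subtype.val G

/-- The graph `G - A` obtained by deleting a set `A` of vertices. -/
def deleteSet {α : Type*} (G : SimpleGraph α) (A : Set α) : SimpleGraph {u : α // u ∉ A} :=
  SimpleGraph.comap Subtype.val G

/-- `f` is a Roman dominating function on `G`. -/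
def IsRDF {α : Type*} (G : SimpleGraph α) (f : α → ℕ) : Prop :=
  (∀ u, f u ≤ 2) ∧ ∀ u, f u = 0 → ∃ w, G.Adj u w ∧ f w = 2

/-- The Roman domination number `γ_R(G)`. -/
noncomputable def romanDomNum {α : Type*} (G : SimpleGraph α) [Fintype α] : ℕ :=
  sInf {k | ∃ f : α → ℕ, IsRDF G f ∧ ∑ u, f u = k}

/-- `S` is an independent set of `G`. -/
def IsIndep {α : Type*} (G : SimpleGraph α) (S : Set α) : Prop :=
  ∀ u ∈ S, ∀ w ∈ S, ¬ G.Adj u w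

/-- The independence number `α(G)`. -/
noncomputable def indepNum {α : Type*} (G : SimpleGraph α) [Fintype α] : ℕ :=
  sSup {k | ∃ S : Finset α, IsIndep G ↑S ∧ S.card = k}

/-- The independent domination number `i(G)`. -/
noncomputable def indepDomNum {α : Type*} (G : SimpleGraph α) [Fintype α] : ℕ :=
  sInf {k | ∃ S : Finset α, IsDomSet G ↑S ∧ IsIndep G ↑S ∧ S.card = k}

/-- `S` is a connected dominating set of `G`. -/
def IsConnDomSet {α : Type*} (G : SimpleGraph α) (S : Set α) : Prop :=
  IsDomSet G S ∧ (G.induce S).Connected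

/-- The connected domination number `γ_c(G)`. -/
noncomputable def connDomNum {α : Type*} (G : SimpleGraph α) [Fintype α] : ℕ :=
  sInf {k | ∃ S : Finset α, IsConnDomSet G ↑S ∧ S.card = k}

/-- `D` is a super dominating set of `G`: every `w ∉ D` has a neighbor `u ∈ D` with
`N(u) ⊆ D ∪ {w}`. -/
def IsSuperDomSet {α : Type*} (G : SimpleGraph α) (D : Set α) : Prop :=
  ∀ w ∉ D, ∃ u ∈ D, G.Adj u w ∧ ∀ x, G.Adj u x → x ∈ D ∪ {w}

/-- The super domination number `γ_sp(G)`. -/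
noncomputable def superDomNum {α : Type*} (G : SimpleGraph α) [Fintype α] : ℕ :=
  sInf {k | ∃ S : Finset α, IsSuperDomSet G ↑S ∧ S.card = k}

/-- The number of end vertices (vertices of degree one) of `G`, denoted `n₁(G)`. -/
noncomputable def endVertCount {α : Type*} (G : SimpleGraph α) [Fintype α] : ℕ :=
  Nat.card {u : α // G.degree u = 1}

section StmtAux

open SimpleGraph Walk

variable {α : Type*} {G : SimpleGraph α}

/-- Endpoints of walks starting in an adjacency-closed set stay in the set. -/
lemma walk_closed {S : Set α} (hS : ∀ s ∈ S, ∀ t, G.Adj s t → t ∈ S) :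
    ∀ {a b : α}, G.Walk a b → a ∈ S → b ∈ S := by
  intro a b p
  induction p with
  | nil => exact id
  | cons h q ih => exact fun ha => ih (hS _ ha _ h)

lemma uniq_nbr [Fintype α] {u w : α} (h1 : G.degree u = 1) (hw : G.Adj u w) :
    ∀ t, G.Adj u t → t = w := by
  intro t ht
  obtain ⟨x, hx⟩ := Finset.card_eq_one.mp (h1 : (G.neighborFinset u).card = 1)
  have hwx : w = x := by
    have := (G.mem_neighborFinset u w).mpr hw; rw [hx] at this; simpa using this
  have htx : t = x := by
    have := (G.mem_neighborFinset u t).mpr ht; rw [hx] at this; simpa using this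
  rw [htx, hwx]

lemma deg_pos [Fintype α] (hc : G.Connected) (h2 : 2 ≤ Fintype.card α) (u : α) :
    0 < G.degree u := by
  rw [G.degree_pos_iff_exists_adj]
  have : Nontrivial α := Fintype.one_lt_card_iff_nontrivial.mp (by omega)
  obtain ⟨w, hw⟩ := exists_ne u
  obtain ⟨p⟩ := hc.preconnected u w
  cases p with
  | nil => exact absurd rfl hw
  | cons h q => exact ⟨_, h⟩

lemma leaf_nbr [Fintype α] (hc : G.Connected) (h3 : 3 ≤ Fintype.card α)
    {u w : α} (h1 : G.degree u = 1) (hw : G.Adj u w) : 2 ≤ G.degree w := by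
  by_contra hlt
  have hw1 : G.degree w = 1 := by
    have := deg_pos hc (by omega) w; omega
  have hclosed : ∀ s ∈ ({u, w} : Set α), ∀ t, G.Adj s t → t ∈ ({u, w} : Set α) := by
    rintro s hs t ht
    rcases hs with rfl | hs
    · exact Or.inr (uniq_nbr h1 hw t ht)
    · rw [Set.mem_singleton_iff] at hs; subst hs
      exact Or.inl (uniq_nbr hw1 hw.symm t ht)
  have hall : ∀ x : α, x ∈ ({u, w} : Set α) := fun x => by
    obtain ⟨p⟩ := hc.preconnected u x
    exact walk_closed hclosed p (by simp)
  have hsub : (Finset.univ : Finset α) ⊆ {u, w} := by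
    intro x _
    have := hall x
    simpa using this
  have : Fintype.card α ≤ 2 := by
    calc Fintype.card α = (Finset.univ : Finset α).card := rfl
      _ ≤ ({u, w} : Finset α).card := Finset.card_le_card hsub
      _ ≤ ({w} : Finset α).card + 1 := Finset.card_insert_le _ _
      _ = 2 := by simp
  omega

lemma edge_getVert_one {a b : α} (p : G.Walk a b) (hp : ¬ p.Nil) :
    s(a, p.getVert 1) ∈ p.edges := by
  obtain ⟨u, h, q, rfl⟩ := Walk.not_nil_iff.mp hp
  simp [Walk.getVert_cons_succ]

lemma mem_support_tail_iff {u : α} (p : G.Walk u u) (hp : ¬ p.Nil) (x : α) :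
    x ∈ p.support ↔ x ∈ p.support.tail := by
  constructor
  · intro hx
    rw [Walk.support_eq_cons] at hx
    rcases List.mem_cons.mp hx with rfl | h
    · obtain ⟨b, hb, q, rfl⟩ := Walk.not_nil_iff.mp hp
      simpa using q.end_mem_support
    · exact h
  · intro h
    rw [Walk.support_eq_cons]
    exact List.mem_cons_of_mem _ h

/-- A graph admitting a "parent" function together with a strictly decreasing
potential along parent edges is acyclic. -/
lemma parent_acyclic (G : SimpleGraph α) (f : α → α) (φ : α → ℕ)
    (hstr : ∀ x y, G.Adj x y → (y = f x ∧ φ y < φ x) ∨ (x = f y ∧ φ x < φ y)) :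
    G.IsAcyclic := by
  classical
  intro x c hcyc
  have hxF : x ∈ c.support.toFinset := by simp
  obtain ⟨m, hmF, hmax⟩ := Finset.exists_max_image c.support.toFinset φ ⟨x, hxF⟩
  have hm : m ∈ c.support := by simpa using hmF
  have hcyc' : (c.rotate m hm).IsCycle := hcyc.rotate hm
  set c' : G.Walk m m := c.rotate m hm with hc'def
  have hnn : ¬ c'.Nil := hcyc'.not_nil
  have hmemrot : ∀ z, z ∈ c'.support → z ∈ c.support := by
    intro z hz
    rw [mem_support_tail_iff c' hnn] at hz
    rw [mem_support_tail_iff c hcyc.not_nil]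
    exact (Walk.support_rotate c m hm).mem_iff.mp hz
  have hmax' : ∀ z, z ∈ c'.support → φ z ≤ φ m := by
    intro z hz
    exact hmax z (by simpa using hmemrot z hz)
  have hadj_s : G.Adj m (c'.getVert 1) := c'.adj_snd hnn
  have hs_sup : c'.getVert 1 ∈ c'.support :=
    c'.snd_mem_support_of_mem_edges (edge_getVert_one c' hnn)
  have hfs : c'.getVert 1 = f m := by
    rcases hstr m _ hadj_s with ⟨h, _⟩ | ⟨_, h⟩
    · exact h
    · have := hmax' _ hs_sup; omega
  have hnnr : ¬ c'.reverse.Nil := by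
    rw [Walk.not_nil_iff_lt_length, Walk.length_reverse]
    rw [Walk.not_nil_iff_lt_length] at hnn
    exact hnn
  have hadj_t : G.Adj m (c'.reverse.getVert 1) := c'.reverse.adj_snd hnnr
  have ht_sup : c'.reverse.getVert 1 ∈ c'.support := by
    have h1 := c'.reverse.snd_mem_support_of_mem_edges (edge_getVert_one c'.reverse hnnr)
    rwa [Walk.support_reverse, List.mem_reverse] at h1
  have hft : c'.reverse.getVert 1 = f m := by
    rcases hstr m _ hadj_t with ⟨h, _⟩ | ⟨_, h⟩
    · exact h
    · have := hmax' _ ht_sup; omega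
  obtain ⟨b, hb, q, hq⟩ := Walk.not_nil_iff.mp hnn
  have hsb : c'.getVert 1 = b := by
    rw [hq]; simp [Walk.getVert_cons_succ]
  have hq2 : 2 ≤ q.length := by
    have h3 := hcyc'.three_le_length
    rw [hq] at h3
    simp only [Walk.length_cons] at h3
    omega
  have hcyccons : (Walk.cons hb q).IsCycle := by rw [← hq]; exact hcyc'
  have hedge : s(m, b) ∉ q.edges := ((Walk.cons_isCycle_iff q hb).mp hcyccons).2
  have htq : c'.reverse.getVert 1 = q.reverse.getVert 1 := by
    rw [hq, Walk.reverse_cons, Walk.getVert_append,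
      if_pos (by rw [Walk.length_reverse]; omega : 1 < q.reverse.length)]
  have hedge2 : s(m, q.reverse.getVert 1) ∈ q.reverse.edges :=
    edge_getVert_one q.reverse (by rw [Walk.not_nil_iff_lt_length, Walk.length_reverse]; omega)
  have hts : q.reverse.getVert 1 = b := by
    rw [← htq, hft, ← hfs, hsb]
  rw [hts, Walk.edges_reverse, List.mem_reverse] at hedge2
  exact hedge hedge2

/-- Every tree admits a parent function with strictly decreasing potential towards
any chosen root. -/
lemma tree_parent (hG : G.IsTree) (r : α) :
    ∃ (f : α → α) (φ : α → ℕ), φ r = 0 ∧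
      ∀ x y, G.Adj x y → (y = f x ∧ φ y < φ x) ∨ (x = f y ∧ φ x < φ y) := by
  have hup := hG.existsUnique_path
  choose p hpath hunique using fun x => hup x r
  refine ⟨fun x => (p x).getVert 1, fun x => (p x).length, ?_, ?_⟩
  · have hnil : Walk.nil = p r := hunique r Walk.nil Walk.IsPath.nil
    show (p r).length = 0
    rw [← hnil]; rfl
  · intro x y hxy
    by_cases hx : x ∈ (p y).support
    · right
      have hyx : y ∉ (p x).support := by
        intro hy
        have hspec := (p y).take_spec hx
        have hdrop : (p y).dropUntil x hx = p x :=
          hunique x _ ((hpath y).dropUntil hx)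
        have hnodup := (hpath y).support_nodup
        rw [← hspec, Walk.support_append] at hnodup
        have hdisj := List.disjoint_of_nodup_append hnodup
        have hy1 : y ∈ ((p y).takeUntil x hx).support := Walk.start_mem_support _
        have hy2 : y ∈ ((p y).dropUntil x hx).support.tail := by
          rw [hdrop]
          rw [Walk.support_eq_cons] at hy
          rcases List.mem_cons.mp hy with h' | h'
          · exact absurd h'.symm hxy.ne
          · exact h'
        exact hdisj hy1 hy2
      have hconsPath : (Walk.cons hxy.symm (p x)).IsPath := (hpath x).cons hyx
      have heq : Walk.cons hxy.symm (p x) = p y := hunique y _ hconsPath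
      constructor
      · show x = (p y).getVert 1
        rw [← heq]; simp [Walk.getVert_cons_succ]
      · show (p x).length < (p y).length
        rw [← heq]; simp [Walk.length_cons]
    · left
      have hconsPath : (Walk.cons hxy (p y)).IsPath := (hpath y).cons hx
      have heq : Walk.cons hxy (p y) = p x := hunique x _ hconsPath
      constructor
      · show y = (p x).getVert 1
        rw [← heq]; simp [Walk.getVert_cons_succ]
      · show (p y).length < (p x).length
        rw [← heq]; simp [Walk.length_cons]

/-- The set of internal (non-leaf) vertices. -/
noncomputable def intern (G : SimpleGraph α) [Fintype α] : Finset α :=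
  Finset.univ.filter (fun u => 2 ≤ G.degree u)

lemma mem_intern [Fintype α] {u : α} : u ∈ intern G ↔ 2 ≤ G.degree u := by
  simp [intern]

lemma intern_reach [Fintype α] : ∀ {x y : α} (p : G.Walk x y), p.IsPath →
    ∀ (hx : x ∈ (↑(intern G) : Set α)) (hy : y ∈ (↑(intern G) : Set α)),
    (G.induce ↑(intern G)).Reachable ⟨x, hx⟩ ⟨y, hy⟩ := by
  intro x y p
  induction p with
  | nil => exact fun _ hx hy => Reachable.refl _
  | @cons a b y h q ih =>
    intro hp hx hy
    by_cases hq : q.Nil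
    · have hby : b = y := hq.eq
      subst hby
      have hadj : (G.induce ↑(intern G)).Adj ⟨a, hx⟩ ⟨b, hy⟩ := by
        simpa using h
      exact hadj.reachable
    · have hc := q.adj_snd hq
      have hcsup : q.getVert 1 ∈ q.support :=
        q.snd_mem_support_of_mem_edges (edge_getVert_one q hq)
      have hanotin : a ∉ q.support := ((Walk.cons_isPath_iff h q).mp hp).2
      have hac : a ≠ q.getVert 1 := fun hh => hanotin (hh ▸ hcsup)
      have hb2 : b ∈ (↑(intern G) : Set α) := by
        have hsub : ({a, q.getVert 1} : Finset α) ⊆ G.neighborFinset b := by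
          intro z hz
          rcases Finset.mem_insert.mp hz with rfl | hz'
          · exact (G.mem_neighborFinset b z).mpr h.symm
          · rw [Finset.mem_singleton] at hz'
            subst hz'
            exact (G.mem_neighborFinset b _).mpr hc
        have hcard : 2 ≤ G.degree b := by
          have hle := Finset.card_le_card hsub
          rwa [Finset.card_insert_of_notMem (by simpa using hac),
            Finset.card_singleton] at hle
        simp only [Finset.coe_filter, intern, Set.mem_setOf_eq]
        simpa [intern] using hcard
      have hadj : (G.induce ↑(intern G)).Adj ⟨a, hx⟩ ⟨b, hb2⟩ := by
        simpa using h
      exact hadj.reachable.trans (ih ((Walk.cons_isPath_iff h q).mp hp).1 hb2 hy)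

lemma intern_subset [Fintype α] (hG : G.IsTree) (S : Finset α) (hdom : IsDomSet G ↑S)
    (hconn : (G.induce ↑S).Connected) : intern G ⊆ S := by
  intro u hu
  rw [mem_intern] at hu
  by_contra huS
  obtain ⟨s, hsS, hsu⟩ := hdom u (by simpa using huS)
  have hsS' : s ∈ S := by simpa using hsS
  obtain ⟨t, htnf, hts⟩ :=
    Finset.exists_mem_ne (s := G.neighborFinset u) (by
      have : 1 < G.degree u := by omega
      exact this) s
  have hut : G.Adj u t := (G.mem_neighborFinset u t).mp htnf
  have key : ∀ x ∈ S, ∃ W : G.Walk s x, u ∉ W.support := by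
    intro x hxS
    obtain ⟨W0⟩ := hconn.preconnected ⟨s, by simpa using hsS'⟩ ⟨x, by simpa using hxS⟩
    refine ⟨W0.map (SimpleGraph.Embedding.induce (↑S : Set α)).toHom, ?_⟩
    intro hmem
    replace hmem : u ∈ (W0.map (SimpleGraph.Embedding.induce (↑S : Set α)).toHom).support := hmem
    rw [Walk.support_map] at hmem
    obtain ⟨z, hz, hzu⟩ := List.mem_map.mp hmem
    apply huS
    have hz2 : (z : α) ∈ (↑S : Set α) := z.2
    rw [show ((SimpleGraph.Embedding.induce (↑S : Set α)).toHom z : α) = (z : α) from rfl] at hzu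
    rw [hzu] at hz2
    simpa using hz2
  have hP : (Walk.cons hsu (Walk.cons hut Walk.nil)).IsPath := by
    refine (Walk.cons_isPath_iff _ _).mpr ⟨(Walk.cons_isPath_iff _ _).mpr
      ⟨Walk.IsPath.nil, by simp [hut.ne]⟩, ?_⟩
    simp [hsu.ne, Ne.symm hts]
  by_cases htS : t ∈ S
  · obtain ⟨W, hW⟩ := key t htS
    apply hW
    have heq : W.bypass = Walk.cons hsu (Walk.cons hut Walk.nil) :=
      (hG.existsUnique_path s t).unique W.bypass_isPath hP
    have hmem : u ∈ W.bypass.support := by rw [heq]; simp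
    exact W.support_bypass_subset hmem
  · obtain ⟨s', hs'S, hs't⟩ := hdom t (by simpa using htS)
    have hs'S' : s' ∈ S := by simpa using hs'S
    obtain ⟨W, hW⟩ := key s' hs'S'
    have hW'sup : u ∉ (W.concat hs't).support := by
      rw [Walk.support_concat]
      intro hmem
      rw [List.mem_append, List.mem_singleton] at hmem
      rcases hmem with h' | h'
      · exact hW h'
      · exact hut.ne h'
    apply hW'sup
    have heq : (W.concat hs't).bypass = Walk.cons hsu (Walk.cons hut Walk.nil) :=
      (hG.existsUnique_path s t).unique (W.concat hs't).bypass_isPath hP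
    have hmem : u ∈ (W.concat hs't).bypass.support := by rw [heq]; simp
    exact (W.concat hs't).support_bypass_subset hmem

/-- The connected domination number of a tree of order at least 3 is the number of
internal vertices. -/
lemma connDomNum_tree [Fintype α] (hG : G.IsTree) (h3 : 3 ≤ Fintype.card α) :
    connDomNum G = (intern G).card := by
  have hc := hG.isConnected
  have hdom : IsDomSet G ↑(intern G) := by
    intro w hw
    have hw2 : ¬ 2 ≤ G.degree w := by
      intro h'
      exact hw (by simpa [intern] using h')
    have hw1 : G.degree w = 1 := by have := deg_pos hc (by omega) w; omega
    obtain ⟨x, hx⟩ := (G.degree_pos_iff_exists_adj w).mp (by omega)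
    exact ⟨x, by simpa [intern] using leaf_nbr hc h3 hw1 hx, hx.symm⟩
  have hconn : (G.induce ↑(intern G)).Connected := by
    rw [SimpleGraph.connected_iff]
    constructor
    · rintro ⟨x, hx⟩ ⟨y, hy⟩
      obtain ⟨w0⟩ := hc.preconnected x y
      exact intern_reach w0.bypass w0.bypass_isPath hx hy
    · have hex : ∃ u, u ∈ intern G := by
        obtain ⟨u⟩ : Nonempty α := Fintype.card_pos_iff.mp (by omega)
        by_cases hu : 2 ≤ G.degree u
        · exact ⟨u, mem_intern.mpr hu⟩
        · have hu1 : G.degree u = 1 := by have := deg_pos hc (by omega) u; omega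
          obtain ⟨x, hx⟩ := (G.degree_pos_iff_exists_adj u).mp (by omega)
          exact ⟨x, mem_intern.mpr (leaf_nbr hc h3 hu1 hx)⟩
      obtain ⟨u, hu⟩ := hex
      exact ⟨⟨u, by simpa using hu⟩⟩
  have hmem : (intern G).card ∈ {k | ∃ S : Finset α, IsConnDomSet G ↑S ∧ S.card = k} :=
    ⟨intern G, ⟨hdom, hconn⟩, rfl⟩
  apply le_antisymm
  · exact Nat.sInf_le hmem
  · apply le_csInf ⟨(intern G).card, hmem⟩
    rintro k ⟨S, ⟨hd, hco⟩, rfl⟩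
    exact Finset.card_le_card (intern_subset hG S hd hco)

variable {β : Type*}

lemma rootedProd_adj {G : SimpleGraph α} {H : SimpleGraph β} {v : β} {x y : α × β} :
    (rootedProd G H v).Adj x y ↔
      (x.2 = v ∧ y.2 = v ∧ G.Adj x.1 y.1) ∨ (x.1 = y.1 ∧ H.Adj x.2 y.2) := Iff.rfl

lemma rootedProd_degree_ne [Fintype α] [Fintype β] {G : SimpleGraph α} {H : SimpleGraph β}
    {v : β} (a : α) {b : β} (hb : b ≠ v) :
    (rootedProd G H v).degree (a, b) = H.degree b := by
  have hnf : (rootedProd G H v).neighborFinset (a, b) = {a} ×ˢ H.neighborFinset b := by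
    ext ⟨c, d⟩
    simp only [SimpleGraph.mem_neighborFinset, rootedProd_adj, Finset.mem_product,
      Finset.mem_singleton]
    constructor
    · rintro (⟨h1, _, _⟩ | ⟨h1, h2⟩)
      · exact absurd h1 hb
      · exact ⟨h1.symm, h2⟩
    · rintro ⟨h1, h2⟩
      exact Or.inr ⟨h1.symm, h2⟩
  show ((rootedProd G H v).neighborFinset (a, b)).card = (H.neighborFinset b).card
  rw [hnf, Finset.card_product, Finset.card_singleton, one_mul]

lemma rootedProd_degree_v [Fintype α] [Fintype β] {G : SimpleGraph α} {H : SimpleGraph β}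
    {v : β} (a : α) :
    (rootedProd G H v).degree (a, v) = G.degree a + H.degree v := by
  have hnf : (rootedProd G H v).neighborFinset (a, v) =
      (G.neighborFinset a) ×ˢ {v} ∪ {a} ×ˢ H.neighborFinset v := by
    ext ⟨c, d⟩
    simp only [SimpleGraph.mem_neighborFinset, rootedProd_adj, Finset.mem_union,
      Finset.mem_product, Finset.mem_singleton, eq_self_iff_true, true_and]
    constructor
    · rintro (⟨h2, h3⟩ | ⟨h1, h2⟩)
      · exact Or.inl ⟨h3, h2⟩
      · exact Or.inr ⟨h1.symm, h2⟩
    · rintro (⟨h1, h2⟩ | ⟨h1, h2⟩)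
      · exact Or.inl ⟨h2, h1⟩
      · exact Or.inr ⟨h1.symm, h2⟩
  have hdisj : Disjoint ((G.neighborFinset a) ×ˢ ({v} : Finset β))
      (({a} : Finset α) ×ˢ H.neighborFinset v) := by
    rw [Finset.disjoint_left]
    rintro ⟨c, d⟩ hA hB
    rw [Finset.mem_product] at hA hB
    have h1 : G.Adj a c := (G.mem_neighborFinset a c).mp hA.1
    have h2 : c = a := by simpa using hB.1
    rw [h2] at h1
    exact G.loopless.irrefl a h1
  show ((rootedProd G H v).neighborFinset (a, v)).card = _
  rw [hnf, Finset.card_union_of_disjoint hdisj, Finset.card_product, Finset.card_product,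
    Finset.card_singleton, Finset.card_singleton, mul_one, one_mul]
  rfl

lemma rootedProd_connected {G : SimpleGraph α} {H : SimpleGraph β} {v : β}
    (hG : G.Connected) (hH : H.Connected) : (rootedProd G H v).Connected := by
  have hne : Nonempty (α × β) := ⟨(hG.nonempty.some, hH.nonempty.some)⟩
  rw [SimpleGraph.connected_iff]
  refine ⟨?_, hne⟩
  let hom1 : G →g rootedProd G H v := ⟨fun a => (a, v), fun h => Or.inl ⟨rfl, rfl, h⟩⟩
  let hom2 : α → (H →g rootedProd G H v) :=
    fun a => ⟨fun b => (a, b), fun h => Or.inr ⟨rfl, h⟩⟩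
  rintro ⟨a, b⟩ ⟨c, d⟩
  have r1 : (rootedProd G H v).Reachable (a, b) (a, v) := (hH.preconnected b v).map (hom2 a)
  have r2 : (rootedProd G H v).Reachable (a, v) (c, v) := (hG.preconnected a c).map hom1
  have r3 : (rootedProd G H v).Reachable (c, v) (c, d) := (hH.preconnected v d).map (hom2 c)
  exact (r1.trans r2).trans r3

lemma rootedProd_isTree {G : SimpleGraph α} {H : SimpleGraph β} (v : β)
    (h₁ : G.IsTree) (h₂ : H.IsTree) : (rootedProd G H v).IsTree := by
  refine ⟨rootedProd_connected h₁.isConnected h₂.isConnected, ?_⟩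
  have hne : Nonempty α := h₁.isConnected.nonempty
  obtain ⟨f₁, φ₁, _, hstr₁⟩ := tree_parent h₁ hne.some
  obtain ⟨f₂, φ₂, hv0, hstr₂⟩ := tree_parent h₂ v
  apply parent_acyclic _ (fun x => if x.2 = v then (f₁ x.1, v) else (x.1, f₂ x.2))
    (fun x => φ₁ x.1 + φ₂ x.2)
  rintro ⟨a, b⟩ ⟨c, d⟩ (⟨hb, hd, h3⟩ | ⟨h1, h2⟩)
  · dsimp only at hb hd ⊢
    subst hb; subst hd
    rcases hstr₁ a c h3 with ⟨hf, hφ⟩ | ⟨hf, hφ⟩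
    · left
      refine ⟨?_, by simpa using hφ⟩
      rw [if_pos rfl, ← hf]
    · right
      refine ⟨?_, by simpa using hφ⟩
      rw [if_pos rfl, ← hf]
  · dsimp only at h1 h2 ⊢
    subst h1
    rcases hstr₂ b d h2 with ⟨hf, hφ⟩ | ⟨hf, hφ⟩
    · have hbv : b ≠ v := by
        intro hb; rw [hb, hv0] at hφ; omega
      left
      refine ⟨?_, by omega⟩
      rw [if_neg hbv, ← hf]
    · have hdv : d ≠ v := by
        intro hd; rw [hd, hv0] at hφ; omega
      right
      refine ⟨?_, by omega⟩
      rw [if_neg hdv, ← hf]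

end StmtAux


/-- for trees `T₁, T₂` of order at least three with root `v` of `T₂`,
`γ_c(T₁∘T₂) = n(T₁)·γ_c(T₂)` iff `v` is not an end vertex of `T₂`. -/
theorem stmt18 {α β : Type*} [Fintype α] [Fintype β]
    (T₁ : SimpleGraph α) (T₂ : SimpleGraph β) (v : β)
    (h₁ : T₁.IsTree) (h₂ : T₂.IsTree)
    (hn : 3 ≤ Fintype.card α) (hm : 3 ≤ Fintype.card β) :
    connDomNum (rootedProd T₁ T₂ v) = Fintype.card α * connDomNum T₂ ↔
      ¬ T₂.degree v = 1 := by
  classical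
  have hT1c := h₁.isConnected
  have hT2c := h₂.isConnected
  have hPtree : (rootedProd T₁ T₂ v).IsTree := rootedProd_isTree v h₁ h₂
  have hcardP : 3 ≤ Fintype.card (α × β) := by
    rw [Fintype.card_prod]
    nlinarith
  have hL1P := connDomNum_tree hPtree hcardP
  have hL1T2 := connDomNum_tree h₂ hm
  have hdegpos1 : ∀ a, 0 < T₁.degree a := deg_pos hT1c (by omega)
  have hdegpos2 : ∀ b, 0 < T₂.degree b := deg_pos hT2c (by omega)
  have hfilter : intern (rootedProd T₁ T₂ v) =
      Finset.univ ×ˢ (Finset.univ.filter fun b => b = v ∨ 2 ≤ T₂.degree b) := by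
    ext ⟨a, b⟩
    simp only [intern, Finset.mem_filter, Finset.mem_univ, true_and, Finset.mem_product]
    by_cases hb : b = v
    · subst hb
      rw [rootedProd_degree_v]
      constructor
      · intro _; exact Or.inl rfl
      · intro _
        have := hdegpos1 a
        have := hdegpos2 b
        omega
    · rw [rootedProd_degree_ne a hb]
      constructor
      · intro h'; exact Or.inr h'
      · rintro (h' | h')
        · exact absurd h' hb
        · exact h'
  have hcardeq : connDomNum (rootedProd T₁ T₂ v) =
      Fintype.card α * (Finset.univ.filter fun b => b = v ∨ 2 ≤ T₂.degree b).card := by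
    rw [hL1P, hfilter, Finset.card_product, Finset.card_univ]
  rw [hcardeq, hL1T2]
  by_cases hv : 2 ≤ T₂.degree v
  · have hQ : (Finset.univ.filter fun b => b = v ∨ 2 ≤ T₂.degree b) = intern T₂ := by
      ext b
      simp only [Finset.mem_filter, Finset.mem_univ, true_and, mem_intern]
      constructor
      · rintro (rfl | h')
        · exact hv
        · exact h'
      · exact Or.inr
    rw [hQ]
    exact iff_of_true rfl (by omega)
  · have hv1 : T₂.degree v = 1 := by
      have := hdegpos2 v; omega
    have hvnot : v ∉ intern T₂ := by
      rw [mem_intern]; omega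
    have hQ : (Finset.univ.filter fun b => b = v ∨ 2 ≤ T₂.degree b) = insert v (intern T₂) := by
      ext b
      simp only [Finset.mem_filter, Finset.mem_univ, true_and, Finset.mem_insert, mem_intern]
    rw [hQ, Finset.card_insert_of_notMem hvnot]
    apply iff_of_false
    · intro hEq
      rw [Nat.mul_add, Nat.mul_one] at hEq
      have h0 : Fintype.card α = 0 := by
        have := Nat.add_left_cancel (hEq.trans (Nat.add_zero _).symm)
        exact this
      omega
    · exact not_not_intro hv1
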